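/- Let α > 0 and let G₁, G₂ be Borel probability measures on ℝ supported on the open interval (0,1), mutually absolutely continuous, whose Radon–Nikodym derivative dG₁/dG₂ equals the function r ↦ α(1−r)/r, G₂-almost everywhere. Then the ratio of cumulative distribution functions r ↦ G₁([0,r]) / G₂([0,r]) is non-increasing on the set of r ∈ (0,1) with G₂([0,r]) > 0; that is, for all 0 < r ≤ r' < 1 with G₂([0,r]) > 0, one has G₁([0,r])·G₂([0,r']) ≥ G₁([0,r'])·G₂([0,r]). -/

import Mathlib

open MeasureTheory

/-- Part (1) of Lemma A.3: the ratio of CDFs `r ↦ G₁([0,r]) / G₂([0,r])` is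
non-increasing where defined, in cross-multiplied form. -/
theorem bayes_cdf_ratio_monotone
    {α : ℝ} (hα : 0 < α)
    (G₁ G₂ : Measure ℝ) [IsProbabilityMeasure G₁] [IsProbabilityMeasure G₂]
    (hsupp₁ : G₁ (Set.Ioo (0 : ℝ) 1)ᶜ = 0) (hsupp₂ : G₂ (Set.Ioo (0 : ℝ) 1)ᶜ = 0)
    (hac₁ : G₁ ≪ G₂) (hac₂ : G₂ ≪ G₁)
    (hrn : G₁.rnDeriv G₂ =ᵐ[G₂] fun r => ENNReal.ofReal (α * ((1 - r) / r))) :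
    ∀ r r' : ℝ, 0 < r → r ≤ r' → r' < 1 → 0 < (G₂ (Set.Icc 0 r)).toReal →
      (G₁ (Set.Icc 0 r')).toReal * (G₂ (Set.Icc 0 r)).toReal ≤
        (G₁ (Set.Icc 0 r)).toReal * (G₂ (Set.Icc 0 r')).toReal := by
  intro r r' hr hrr' hr'1 _
  set c : ENNReal := ENNReal.ofReal (α * ((1 - r) / r)) with hc
  have hmem₂ : ∀ᵐ x ∂G₂, x ∈ Set.Ioo (0 : ℝ) 1 :=
    ae_iff.mpr hsupp₂
  -- Step A: on (r, r'], the density is at most c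
  have hA : G₁ (Set.Ioc r r') ≤ c * G₂ (Set.Ioc r r') := by
    rw [← Measure.setLIntegral_rnDeriv hac₁]
    calc ∫⁻ x in Set.Ioc r r', G₁.rnDeriv G₂ x ∂G₂
        = ∫⁻ x in Set.Ioc r r', ENNReal.ofReal (α * ((1 - x) / x)) ∂G₂ :=
          lintegral_congr_ae (ae_restrict_of_ae hrn)
      _ ≤ ∫⁻ _x in Set.Ioc r r', c ∂G₂ := by
          refine lintegral_mono_ae ?_
          filter_upwards [ae_restrict_mem measurableSet_Ioc] with x hx
          have hxr : r < x := hx.1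
          have hx0 : 0 < x := lt_trans hr hxr
          refine ENNReal.ofReal_le_ofReal ?_
          have : (1 - x) / x ≤ (1 - r) / r := by
            rw [div_le_div_iff₀ hx0 hr]; nlinarith
          nlinarith
      _ = c * G₂ (Set.Ioc r r') := by
          rw [setLIntegral_const]
  -- Step B: on [0, r], the density is at least c
  have hB : c * G₂ (Set.Icc 0 r) ≤ G₁ (Set.Icc 0 r) := by
    rw [← Measure.setLIntegral_rnDeriv hac₁]
    calc c * G₂ (Set.Icc 0 r) = ∫⁻ _x in Set.Icc 0 r, c ∂G₂ := by
          rw [setLIntegral_const]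
      _ ≤ ∫⁻ x in Set.Icc 0 r, ENNReal.ofReal (α * ((1 - x) / x)) ∂G₂ := by
          refine lintegral_mono_ae ?_
          filter_upwards [ae_restrict_mem measurableSet_Icc,
            ae_restrict_of_ae hmem₂] with x hx hx01
          have hx0 : 0 < x := hx01.1
          refine ENNReal.ofReal_le_ofReal ?_
          have : (1 - r) / r ≤ (1 - x) / x := by
            rw [div_le_div_iff₀ hr hx0]; nlinarith [hx.2]
          nlinarith
      _ = ∫⁻ x in Set.Icc 0 r, G₁.rnDeriv G₂ x ∂G₂ :=
          (lintegral_congr_ae (ae_restrict_of_ae hrn)).symm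
  -- split [0, r'] = [0, r] ∪ (r, r']
  have hsplit : ∀ μ : Measure ℝ, μ (Set.Icc 0 r') = μ (Set.Icc 0 r) + μ (Set.Ioc r r') := by
    intro μ
    rw [← Set.Icc_union_Ioc_eq_Icc (le_of_lt hr) hrr',
      measure_union (Set.disjoint_left.mpr fun x hx hx' => absurd hx.2 (not_le.mpr hx'.1)) measurableSet_Ioc]
  have key : G₁ (Set.Icc 0 r') * G₂ (Set.Icc 0 r) ≤ G₁ (Set.Icc 0 r) * G₂ (Set.Icc 0 r') := by
    rw [hsplit G₁, hsplit G₂, add_mul, mul_add]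
    refine add_le_add_right ?_ _
    calc G₁ (Set.Ioc r r') * G₂ (Set.Icc 0 r)
        ≤ (c * G₂ (Set.Ioc r r')) * G₂ (Set.Icc 0 r) := mul_le_mul_left hA _
      _ = G₂ (Set.Ioc r r') * (c * G₂ (Set.Icc 0 r)) := by ring
      _ ≤ G₂ (Set.Ioc r r') * G₁ (Set.Icc 0 r) := mul_le_mul_right hB _
      _ = G₁ (Set.Icc 0 r) * G₂ (Set.Ioc r r') := mul_comm _ _
  rw [← ENNReal.toReal_mul, ← ENNReal.toReal_mul]
  exact ENNReal.toReal_mono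
    (ENNReal.mul_ne_top (measure_ne_top _ _) (measure_ne_top _ _)) key
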